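/- Let A, B, C be real polynomials in three variables x1, x2, x3 satisfying the three identities: (x1²+x2²+x3²)(∂A/∂x2 − ∂B/∂x1) = 2(A·x2 − B·x1), (x1²+x2²+x3²)(∂A/∂x3 − ∂C/∂x1) = 2(A·x3 − C·x1), and (x1²+x2²+x3²)(∂B/∂x3 − ∂C/∂x2) = 2(B·x3 − C·x2). Then there exist polynomials Ã, B̃, C̃ and a real constant a such that A = a·x1 + (x1²+x2²+x3²)·Ã, B = a·x2 + (x1²+x2²+x3²)·B̃, C = a·x3 + (x1²+x2²+x3²)·C̃, with ∂Ã/∂x2 = ∂B̃/∂x1, ∂Ã/∂x3 = ∂C̃/∂x1, and ∂B̃/∂x3 = ∂C̃/∂x2. -/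

import Mathlib

open MvPolynomial

noncomputable section NakanishiAux

private lemma nak_primeX0 : Prime (X 0 : MvPolynomial (Fin 3) ℝ) := by
  have e := (MulEquiv.prime_iff (MvPolynomial.finSuccEquiv ℝ 2).toMulEquiv
    (p := (X 0 : MvPolynomial (Fin 3) ℝ))).symm
  rw [e]
  show Prime (MvPolynomial.finSuccEquiv ℝ 2 (X 0))
  rw [MvPolynomial.finSuccEquiv_X_zero]
  exact Polynomial.prime_X

private lemma nak_p_ne_zero : (X 0 ^ 2 + X 1 ^ 2 + X 2 ^ 2 : MvPolynomial (Fin 3) ℝ) ≠ 0 := by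
  intro h
  have := congrArg (eval (fun _ => (1:ℝ))) h
  norm_num at this

private lemma nak_X0_not_dvd_X1 : ¬ ((X 0 : MvPolynomial (Fin 3) ℝ) ∣ X 1) := by
  intro ⟨g, hg⟩
  have := congrArg (eval (fun i => if i = 1 then (1:ℝ) else 0)) hg
  simp at this

private lemma nak_two_ne_zero : (2 : MvPolynomial (Fin 3) ℝ) ≠ 0 := by
  intro h
  have := congrArg (eval (fun _ => (1:ℝ))) h
  norm_num at this

private lemma nak_deg3 (d : Fin 3 →₀ ℕ) : Finsupp.degree d = d 0 + d 1 + d 2 := by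
  rw [Finsupp.degree_apply]
  rw [Finset.sum_subset (Finset.subset_univ d.support)
    (by intro x _ hx; simpa using Finsupp.notMem_support_iff.mp hx)]
  simp [Fin.sum_univ_three]

private lemma nak_coeff_X_mul_pderiv (i : Fin 3) (f : MvPolynomial (Fin 3) ℝ) (m : Fin 3 →₀ ℕ) :
    coeff m (X i * pderiv i f) = (m i : ℝ) * coeff m f := by
  induction f using MvPolynomial.induction_on' with
  | monomial s a =>
    rw [pderiv_monomial]
    rw [X, monomial_mul]
    rcases Nat.eq_zero_or_pos (s i) with h | h
    · rw [coeff_monomial, coeff_monomial, h]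
      rcases eq_or_ne s m with rfl | hne
      · simp [h]
      · simp only [hne, if_false, Nat.cast_zero, mul_zero]
        rcases eq_or_ne ((fun₀ | i => 1) + (s - fun₀ | i => 1)) m with heq | hne2
        · simp [heq]
        · simp [hne2]
    · have hle : Finsupp.single i 1 ≤ s := by
        rw [Finsupp.single_le_iff]; exact h
      have : Finsupp.single i 1 + (s - Finsupp.single i 1) = s := by
        rw [add_comm]; exact tsub_add_cancel_of_le hle
      rw [this]
      simp [coeff_monomial]
      rcases eq_or_ne s m with rfl | hne
      · simp [mul_comm]
      · simp [hne, Ne.symm hne]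
  | add f g hf hg =>
    rw [map_add, mul_add, coeff_add, coeff_add, hf, hg]
    ring

/-- The Euler operator. -/
private def nakE (f : MvPolynomial (Fin 3) ℝ) : MvPolynomial (Fin 3) ℝ :=
  X 0 * pderiv 0 f + X 1 * pderiv 1 f + X 2 * pderiv 2 f

private lemma nak_hc_E (n : ℕ) (f : MvPolynomial (Fin 3) ℝ) :
    homogeneousComponent n (nakE f) = (n : ℝ) • homogeneousComponent n f := by
  ext m
  rw [coeff_smul, coeff_homogeneousComponent, coeff_homogeneousComponent]
  rcases eq_or_ne (Finsupp.degree m) n with h | h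
  · simp only [h, if_true]
    rw [nakE, coeff_add, coeff_add, nak_coeff_X_mul_pderiv, nak_coeff_X_mul_pderiv,
      nak_coeff_X_mul_pderiv]
    rw [← h, nak_deg3]
    push_cast
    rw [smul_eq_mul]
    ring
  · simp [h]

private lemma nak_hc_monomial (n : ℕ) (s : Fin 3 →₀ ℕ) (c : ℝ) :
    homogeneousComponent n (monomial s c) =
      if Finsupp.degree s = n then monomial s c else 0 := by
  ext m
  rw [coeff_homogeneousComponent]
  rcases eq_or_ne s m with rfl | hne
  · split <;> simp [coeff_monomial]
  · rw [coeff_monomial, if_neg hne]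
    split <;> split <;> simp_all [coeff_monomial, hne]

private lemma nak_degree_add_single (s : Fin 3 →₀ ℕ) (i : Fin 3) :
    Finsupp.degree (Finsupp.single i 2 + s) = Finsupp.degree s + 2 := by
  rw [nak_deg3, nak_deg3]
  have h0 := Finsupp.add_apply (Finsupp.single i 2) s 0
  have h1 := Finsupp.add_apply (Finsupp.single i 2) s 1
  have h2 := Finsupp.add_apply (Finsupp.single i 2) s 2
  fin_cases i <;> simp_all [Finsupp.single_apply] <;> omega

private lemma nak_hc_p_mul (n : ℕ) (K : MvPolynomial (Fin 3) ℝ) :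
    homogeneousComponent (n+2) ((X 0^2 + X 1^2 + X 2^2) * K)
      = (X 0^2 + X 1^2 + X 2^2) * homogeneousComponent n K := by
  induction K using MvPolynomial.induction_on' with
  | monomial s c =>
    have expand : (X 0^2 + X 1^2 + X 2^2 : MvPolynomial (Fin 3) ℝ) * monomial s c
        = monomial (Finsupp.single 0 2 + s) c + monomial (Finsupp.single 1 2 + s) c
          + monomial (Finsupp.single 2 2 + s) c := by
      rw [X_pow_eq_monomial, X_pow_eq_monomial, X_pow_eq_monomial]
      rw [add_mul, add_mul, monomial_mul, monomial_mul, monomial_mul, one_mul]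
    rw [expand, map_add, map_add, nak_hc_monomial, nak_hc_monomial, nak_hc_monomial,
      nak_hc_monomial, nak_degree_add_single, nak_degree_add_single, nak_degree_add_single]
    rcases eq_or_ne (Finsupp.degree s) n with h | h
    · simp only [h, if_pos rfl, if_true, eq_self_iff_true]
      rw [← expand]
    · simp [h]
  | add f g hf hg =>
    rw [mul_add, map_add, hf, hg, map_add, mul_add]

private lemma nak_hc1_p_mul (K : MvPolynomial (Fin 3) ℝ) :
    homogeneousComponent 1 ((X 0^2 + X 1^2 + X 2^2) * K) = 0 := by
  induction K using MvPolynomial.induction_on' with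
  | monomial s c =>
    have expand : (X 0^2 + X 1^2 + X 2^2 : MvPolynomial (Fin 3) ℝ) * monomial s c
        = monomial (Finsupp.single 0 2 + s) c + monomial (Finsupp.single 1 2 + s) c
          + monomial (Finsupp.single 2 2 + s) c := by
      rw [X_pow_eq_monomial, X_pow_eq_monomial, X_pow_eq_monomial]
      rw [add_mul, add_mul, monomial_mul, monomial_mul, monomial_mul, one_mul]
    rw [expand, map_add, map_add, nak_hc_monomial, nak_hc_monomial, nak_hc_monomial,
      nak_degree_add_single, nak_degree_add_single, nak_degree_add_single]
    have : Finsupp.degree s + 2 ≠ 1 := by omega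
    simp [this]
  | add f g hf hg =>
    rw [mul_add, map_add, hf, hg, add_zero]

private lemma nakL1 (f K : MvPolynomial (Fin 3) ℝ)
    (h : nakE f = (X 0^2 + X 1^2 + X 2^2) * K) :
    ∃ g, f = C (coeff 0 f) + (X 0^2 + X 1^2 + X 2^2) * g := by
  set p : MvPolynomial (Fin 3) ℝ := X 0^2 + X 1^2 + X 2^2 with hp
  set D := f.totalDegree with hD
  set g : ℕ → MvPolynomial (Fin 3) ℝ :=
    fun i => if i ≤ 1 then 0 else ((i:ℝ)⁻¹) • homogeneousComponent (i-2) K with hg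
  have key : ∀ i, i ≠ 0 → homogeneousComponent i f = p * g i := by
    intro i hi
    have h1 : (i:ℝ) • homogeneousComponent i f = homogeneousComponent i (p * K) := by
      rw [← nak_hc_E, h]
    match i with
    | 1 =>
      rw [nak_hc1_p_mul] at h1
      rw [show ((1:ℕ):ℝ) = 1 by norm_num, one_smul] at h1
      rw [h1]
      simp [hg]
    | (j+2) =>
      rw [nak_hc_p_mul] at h1
      have hne : ((j+2:ℕ):ℝ) ≠ 0 := by positivity
      have : homogeneousComponent (j+2) f
          = ((j+2:ℕ):ℝ)⁻¹ • (p * homogeneousComponent j K) := by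
        rw [← h1, inv_smul_smul₀ hne]
      rw [this, hg]
      simp only [show ¬(j+2 ≤ 1) by omega, if_false]
      rw [mul_smul_comm]
      norm_num
  refine ⟨∑ i ∈ (Finset.range (D+1)).erase 0, g i, ?_⟩
  have hsum := sum_homogeneousComponent f
  rw [Finset.mul_sum]
  calc f = ∑ i ∈ Finset.range (D+1), homogeneousComponent i f := hsum.symm
    _ = homogeneousComponent 0 f
        + ∑ i ∈ (Finset.range (D+1)).erase 0, homogeneousComponent i f :=
        (Finset.add_sum_erase _ _ (by simp)).symm
    _ = C (coeff 0 f) + ∑ i ∈ (Finset.range (D+1)).erase 0, p * g i := by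
        rw [homogeneousComponent_zero]
        congr 1
        exact Finset.sum_congr rfl fun i hi => key i (Finset.ne_of_mem_erase hi)

end NakanishiAux

/-- Three-variable version of Nakanishi's lemma (Lemma 7.2 of the paper). -/
theorem nakanishi_lemma_three_vars (A B C' : MvPolynomial (Fin 3) ℝ)
    (h1 : (X 0 ^ 2 + X 1 ^ 2 + X 2 ^ 2) * (pderiv 1 A - pderiv 0 B)
        = 2 * (A * X 1 - B * X 0))
    (h2 : (X 0 ^ 2 + X 1 ^ 2 + X 2 ^ 2) * (pderiv 2 A - pderiv 0 C')
        = 2 * (A * X 2 - C' * X 0))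
    (h3 : (X 0 ^ 2 + X 1 ^ 2 + X 2 ^ 2) * (pderiv 2 B - pderiv 1 C')
        = 2 * (B * X 2 - C' * X 1)) :
    ∃ (a : ℝ) (At Bt Ct : MvPolynomial (Fin 3) ℝ),
      A = MvPolynomial.C a * X 0 + (X 0 ^ 2 + X 1 ^ 2 + X 2 ^ 2) * At ∧
      B = MvPolynomial.C a * X 1 + (X 0 ^ 2 + X 1 ^ 2 + X 2 ^ 2) * Bt ∧
      C' = MvPolynomial.C a * X 2 + (X 0 ^ 2 + X 1 ^ 2 + X 2 ^ 2) * Ct ∧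
      pderiv 1 At = pderiv 0 Bt ∧
      pderiv 2 At = pderiv 0 Ct ∧
      pderiv 2 Bt = pderiv 1 Ct := by
  have X0ne : (X 0 : MvPolynomial (Fin 3) ℝ) ≠ 0 := nak_primeX0.ne_zero
  obtain ⟨U, hU⟩ : ∃ U, U = pderiv 1 A - pderiv 0 B := ⟨_, rfl⟩
  obtain ⟨V, hV⟩ : ∃ V, V = pderiv 2 A - pderiv 0 C' := ⟨_, rfl⟩
  obtain ⟨W, hW⟩ : ∃ W, W = pderiv 2 B - pderiv 1 C' := ⟨_, rfl⟩
  have h1' : (X 0 ^ 2 + X 1 ^ 2 + X 2 ^ 2) * U = 2 * (A * X 1 - B * X 0) := by rw [hU]; exact h1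
  have h2' : (X 0 ^ 2 + X 1 ^ 2 + X 2 ^ 2) * V = 2 * (A * X 2 - C' * X 0) := by rw [hV]; exact h2
  have h3' : (X 0 ^ 2 + X 1 ^ 2 + X 2 ^ 2) * W = 2 * (B * X 2 - C' * X 1) := by rw [hW]; exact h3
  obtain ⟨T1, hT1⟩ : ∃ T1, T1 = A + A - X 1 * U - X 2 * V := ⟨_, rfl⟩
  obtain ⟨T2, hT2⟩ : ∃ T2, T2 = B + B + X 0 * U - X 2 * W := ⟨_, rfl⟩
  obtain ⟨T3, hT3⟩ : ∃ T3, T3 = C' + C' + X 0 * V + X 1 * W := ⟨_, rfl⟩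
  have t1 : X 0 * (A * X 0 + B * X 1 + C' * X 2 + (A * X 0 + B * X 1 + C' * X 2))
      = (X 0 ^ 2 + X 1 ^ 2 + X 2 ^ 2) * T1 := by
    rw [hT1]; linear_combination X 1 * h1' + X 2 * h2'
  have t2 : X 1 * (A * X 0 + B * X 1 + C' * X 2 + (A * X 0 + B * X 1 + C' * X 2))
      = (X 0 ^ 2 + X 1 ^ 2 + X 2 ^ 2) * T2 := by
    rw [hT2]; linear_combination (-(X 0 : MvPolynomial (Fin 3) ℝ)) * h1' + X 2 * h3'
  have t3 : X 2 * (A * X 0 + B * X 1 + C' * X 2 + (A * X 0 + B * X 1 + C' * X 2))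
      = (X 0 ^ 2 + X 1 ^ 2 + X 2 ^ 2) * T3 := by
    rw [hT3]; linear_combination (-(X 0 : MvPolynomial (Fin 3) ℝ)) * h2' - X 1 * h3'
  have g12 : X 1 * T1 = X 0 * T2 :=
    mul_left_cancel₀ nak_p_ne_zero (by linear_combination (-(X 1 : MvPolynomial (Fin 3) ℝ)) * t1 + X 0 * t2)
  have g13 : X 2 * T1 = X 0 * T3 :=
    mul_left_cancel₀ nak_p_ne_zero (by linear_combination (-(X 2 : MvPolynomial (Fin 3) ℝ)) * t1 + X 0 * t3)
  have dvd1 : (X 0 : MvPolynomial (Fin 3) ℝ) ∣ T1 :=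
    ((nak_primeX0.2.2 (X 1) T1 ⟨T2, g12⟩)).resolve_left nak_X0_not_dvd_X1
  obtain ⟨Q, hQ⟩ := dvd1
  have dA : A + A = X 0 * Q + X 1 * U + X 2 * V := by linear_combination hQ - hT1
  have hT2Q : T2 = X 1 * Q :=
    mul_left_cancel₀ X0ne (by linear_combination -g12 + X 1 * hQ)
  have dB : B + B + X 0 * U = X 1 * Q + X 2 * W := by linear_combination hT2Q - hT2
  have hT3Q : T3 = X 2 * Q :=
    mul_left_cancel₀ X0ne (by linear_combination -g13 + X 2 * hQ)
  have dC : C' + C' + X 0 * V + X 1 * W = X 2 * Q := by linear_combination hT3Q - hT3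
  have xg : X 0 * W + X 2 * U = X 1 * V :=
    mul_left_cancel₀ nak_p_ne_zero
      (by linear_combination X 0 * h3' + X 2 * h1' - X 1 * h2')
  -- derivative consequences
  have e12 : X 0 * pderiv 1 Q + X 0 * pderiv 0 U + X 1 * pderiv 1 U + X 2 * pderiv 1 V
      = X 1 * pderiv 0 Q + X 2 * pderiv 0 W := by
    have dA1 := congrArg (fun t => pderiv (1 : Fin 3) t) dA
    have dB0 := congrArg (fun t => pderiv (0 : Fin 3) t) dB
    simp only [map_add, pderiv_mul, pderiv_X_self, pderiv_pow,
      pderiv_X_of_ne (show (0:Fin 3) ≠ 1 by decide), pderiv_X_of_ne (show (0:Fin 3) ≠ 2 by decide),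
      pderiv_X_of_ne (show (1:Fin 3) ≠ 0 by decide), pderiv_X_of_ne (show (1:Fin 3) ≠ 2 by decide),
      pderiv_X_of_ne (show (2:Fin 3) ≠ 0 by decide), pderiv_X_of_ne (show (2:Fin 3) ≠ 1 by decide),
      zero_mul, mul_zero, one_mul, mul_one, add_zero, zero_add] at dA1 dB0
    linear_combination -dA1 + dB0 - 2 * hU
  have e13 : X 0 * pderiv 2 Q + X 0 * pderiv 0 V + X 2 * pderiv 2 V + X 1 * pderiv 2 U
      + X 1 * pderiv 0 W = X 2 * pderiv 0 Q := by
    have dA2 := congrArg (fun t => pderiv (2 : Fin 3) t) dA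
    have dC0 := congrArg (fun t => pderiv (0 : Fin 3) t) dC
    simp only [map_add, pderiv_mul, pderiv_X_self, pderiv_pow,
      pderiv_X_of_ne (show (0:Fin 3) ≠ 1 by decide), pderiv_X_of_ne (show (0:Fin 3) ≠ 2 by decide),
      pderiv_X_of_ne (show (1:Fin 3) ≠ 0 by decide), pderiv_X_of_ne (show (1:Fin 3) ≠ 2 by decide),
      pderiv_X_of_ne (show (2:Fin 3) ≠ 0 by decide), pderiv_X_of_ne (show (2:Fin 3) ≠ 1 by decide),
      zero_mul, mul_zero, one_mul, mul_one, add_zero, zero_add] at dA2 dC0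
    linear_combination -dA2 + dC0 - 2 * hV
  have e23 : X 1 * pderiv 2 Q + X 1 * pderiv 1 W + X 2 * pderiv 2 W + X 0 * pderiv 1 V
      = X 2 * pderiv 1 Q + X 0 * pderiv 2 U := by
    have dB2 := congrArg (fun t => pderiv (2 : Fin 3) t) dB
    have dC1 := congrArg (fun t => pderiv (1 : Fin 3) t) dC
    simp only [map_add, pderiv_mul, pderiv_X_self, pderiv_pow,
      pderiv_X_of_ne (show (0:Fin 3) ≠ 1 by decide), pderiv_X_of_ne (show (0:Fin 3) ≠ 2 by decide),
      pderiv_X_of_ne (show (1:Fin 3) ≠ 0 by decide), pderiv_X_of_ne (show (1:Fin 3) ≠ 2 by decide),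
      pderiv_X_of_ne (show (2:Fin 3) ≠ 0 by decide), pderiv_X_of_ne (show (2:Fin 3) ≠ 1 by decide),
      zero_mul, mul_zero, one_mul, mul_one, add_zero, zero_add] at dB2 dC1
    linear_combination -dB2 + dC1 - 2 * hW
  have d1g : W + X 0 * pderiv 0 W + X 2 * pderiv 0 U = X 1 * pderiv 0 V := by
    have xg0 := congrArg (fun t => pderiv (0 : Fin 3) t) xg
    simp only [map_add, pderiv_mul, pderiv_X_self, pderiv_pow,
      pderiv_X_of_ne (show (0:Fin 3) ≠ 1 by decide), pderiv_X_of_ne (show (0:Fin 3) ≠ 2 by decide),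
      pderiv_X_of_ne (show (1:Fin 3) ≠ 0 by decide), pderiv_X_of_ne (show (1:Fin 3) ≠ 2 by decide),
      pderiv_X_of_ne (show (2:Fin 3) ≠ 0 by decide), pderiv_X_of_ne (show (2:Fin 3) ≠ 1 by decide),
      zero_mul, mul_zero, one_mul, mul_one, add_zero, zero_add] at xg0
    linear_combination xg0
  have d2g : X 0 * pderiv 1 W + X 2 * pderiv 1 U = V + X 1 * pderiv 1 V := by
    have xg1 := congrArg (fun t => pderiv (1 : Fin 3) t) xg
    simp only [map_add, pderiv_mul, pderiv_X_self, pderiv_pow,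
      pderiv_X_of_ne (show (0:Fin 3) ≠ 1 by decide), pderiv_X_of_ne (show (0:Fin 3) ≠ 2 by decide),
      pderiv_X_of_ne (show (1:Fin 3) ≠ 0 by decide), pderiv_X_of_ne (show (1:Fin 3) ≠ 2 by decide),
      pderiv_X_of_ne (show (2:Fin 3) ≠ 0 by decide), pderiv_X_of_ne (show (2:Fin 3) ≠ 1 by decide),
      zero_mul, mul_zero, one_mul, mul_one, add_zero, zero_add] at xg1
    linear_combination xg1
  have d3g : U + X 0 * pderiv 2 W + X 2 * pderiv 2 U = X 1 * pderiv 2 V := by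
    have xg2 := congrArg (fun t => pderiv (2 : Fin 3) t) xg
    simp only [map_add, pderiv_mul, pderiv_X_self, pderiv_pow,
      pderiv_X_of_ne (show (0:Fin 3) ≠ 1 by decide), pderiv_X_of_ne (show (0:Fin 3) ≠ 2 by decide),
      pderiv_X_of_ne (show (1:Fin 3) ≠ 0 by decide), pderiv_X_of_ne (show (1:Fin 3) ≠ 2 by decide),
      pderiv_X_of_ne (show (2:Fin 3) ≠ 0 by decide), pderiv_X_of_ne (show (2:Fin 3) ≠ 1 by decide),
      zero_mul, mul_zero, one_mul, mul_one, add_zero, zero_add] at xg2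
    linear_combination xg2
  obtain ⟨q, hq⟩ : ∃ q, q = Q + (X 0 * pderiv 0 Q + X 1 * pderiv 1 Q + X 2 * pderiv 2 Q)
      - (X 0 * (pderiv 1 U + pderiv 2 V) + X 1 * (pderiv 2 W - pderiv 0 U)
        + X 2 * (-(pderiv 0 V) - pderiv 1 W)) := ⟨_, rfl⟩
  obtain ⟨Ft1, hF1⟩ : ∃ F, F = pderiv 1 U + pderiv 2 V - pderiv 0 Q := ⟨_, rfl⟩
  obtain ⟨Ft2, hF2⟩ : ∃ F, F = pderiv 2 W - pderiv 0 U - pderiv 1 Q := ⟨_, rfl⟩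
  obtain ⟨Ft3, hF3⟩ : ∃ F, F = -(pderiv 0 V) - pderiv 1 W - pderiv 2 Q := ⟨_, rfl⟩
  have cA : A + A = q * X 0 + (X 0 ^ 2 + X 1 ^ 2 + X 2 ^ 2) * Ft1 := by
    linear_combination dA - X 0 * hq - (X 0 ^ 2 + X 1 ^ 2 + X 2 ^ 2) * hF1
      - X 1 * e12 - X 2 * e13 - X 2 * d2g + X 1 * d3g
  have cB : B + B = q * X 1 + (X 0 ^ 2 + X 1 ^ 2 + X 2 ^ 2) * Ft2 := by
    linear_combination dB - X 1 * hq - (X 0 ^ 2 + X 1 ^ 2 + X 2 ^ 2) * hF2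
      + X 0 * e12 - X 2 * e23 - X 0 * d3g + X 2 * d1g
  have cC : C' + C' = q * X 2 + (X 0 ^ 2 + X 1 ^ 2 + X 2 ^ 2) * Ft3 := by
    linear_combination dC - X 2 * hq - (X 0 ^ 2 + X 1 ^ 2 + X 2 ^ 2) * hF3
      + X 0 * e13 + X 1 * e23 + X 0 * d2g - X 1 * d1g
  have m3 : X 0 * Ft2 - X 1 * Ft1 = -U :=
    mul_left_cancel₀ nak_p_ne_zero (by linear_combination X 1 * cA - X 0 * cB + h1')
  have m2 : X 2 * Ft1 - X 0 * Ft3 = V :=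
    mul_left_cancel₀ nak_p_ne_zero (by linear_combination (-(X 2 : MvPolynomial (Fin 3) ℝ)) * cA + X 0 * cC - h2')
  have m1 : X 1 * Ft3 - X 2 * Ft2 = -W :=
    mul_left_cancel₀ nak_p_ne_zero (by linear_combination X 2 * cB - X 1 * cC + h3')
  have n3 : X 1 * pderiv 0 q - X 0 * pderiv 1 q
      + (X 0 ^ 2 + X 1 ^ 2 + X 2 ^ 2) * (pderiv 0 Ft2 - pderiv 1 Ft1) = 0 := by
    have cB0 := congrArg (fun t => pderiv (0 : Fin 3) t) cB
    have cA1 := congrArg (fun t => pderiv (1 : Fin 3) t) cA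
    simp only [map_add, pderiv_mul, pderiv_X_self, pderiv_pow,
      pderiv_X_of_ne (show (0:Fin 3) ≠ 1 by decide), pderiv_X_of_ne (show (0:Fin 3) ≠ 2 by decide),
      pderiv_X_of_ne (show (1:Fin 3) ≠ 0 by decide), pderiv_X_of_ne (show (1:Fin 3) ≠ 2 by decide),
      pderiv_X_of_ne (show (2:Fin 3) ≠ 0 by decide), pderiv_X_of_ne (show (2:Fin 3) ≠ 1 by decide),
      zero_mul, mul_zero, one_mul, mul_one, add_zero, zero_add] at cB0 cA1
    linear_combination -cB0 + cA1 + 2 * hU - 2 * m3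
  have n2 : X 0 * pderiv 2 q - X 2 * pderiv 0 q
      + (X 0 ^ 2 + X 1 ^ 2 + X 2 ^ 2) * (pderiv 2 Ft1 - pderiv 0 Ft3) = 0 := by
    have cA2 := congrArg (fun t => pderiv (2 : Fin 3) t) cA
    have cC0 := congrArg (fun t => pderiv (0 : Fin 3) t) cC
    simp only [map_add, pderiv_mul, pderiv_X_self, pderiv_pow,
      pderiv_X_of_ne (show (0:Fin 3) ≠ 1 by decide), pderiv_X_of_ne (show (0:Fin 3) ≠ 2 by decide),
      pderiv_X_of_ne (show (1:Fin 3) ≠ 0 by decide), pderiv_X_of_ne (show (1:Fin 3) ≠ 2 by decide),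
      pderiv_X_of_ne (show (2:Fin 3) ≠ 0 by decide), pderiv_X_of_ne (show (2:Fin 3) ≠ 1 by decide),
      zero_mul, mul_zero, one_mul, mul_one, add_zero, zero_add] at cA2 cC0
    linear_combination cC0 - cA2 - 2 * hV - 2 * m2
  have n1 : X 2 * pderiv 1 q - X 1 * pderiv 2 q
      + (X 0 ^ 2 + X 1 ^ 2 + X 2 ^ 2) * (pderiv 1 Ft3 - pderiv 2 Ft2) = 0 := by
    have cB2 := congrArg (fun t => pderiv (2 : Fin 3) t) cB
    have cC1 := congrArg (fun t => pderiv (1 : Fin 3) t) cC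
    simp only [map_add, pderiv_mul, pderiv_X_self, pderiv_pow,
      pderiv_X_of_ne (show (0:Fin 3) ≠ 1 by decide), pderiv_X_of_ne (show (0:Fin 3) ≠ 2 by decide),
      pderiv_X_of_ne (show (1:Fin 3) ≠ 0 by decide), pderiv_X_of_ne (show (1:Fin 3) ≠ 2 by decide),
      pderiv_X_of_ne (show (2:Fin 3) ≠ 0 by decide), pderiv_X_of_ne (show (2:Fin 3) ≠ 1 by decide),
      zero_mul, mul_zero, one_mul, mul_one, add_zero, zero_add] at cB2 cC1
    linear_combination cB2 - cC1 + 2 * hW - 2 * m1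
  obtain ⟨K1, hK1⟩ : ∃ K, K = pderiv 0 q + X 1 * (pderiv 0 Ft2 - pderiv 1 Ft1)
      - X 2 * (pderiv 2 Ft1 - pderiv 0 Ft3) := ⟨_, rfl⟩
  obtain ⟨K2, hK2⟩ : ∃ K, K = pderiv 1 q - X 0 * (pderiv 0 Ft2 - pderiv 1 Ft1)
      + X 2 * (pderiv 1 Ft3 - pderiv 2 Ft2) := ⟨_, rfl⟩
  have k1 : X 0 * (X 0 * pderiv 0 q + X 1 * pderiv 1 q + X 2 * pderiv 2 q)
      = (X 0 ^ 2 + X 1 ^ 2 + X 2 ^ 2) * K1 := by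
    rw [hK1]; linear_combination (-(X 1 : MvPolynomial (Fin 3) ℝ)) * n3 + X 2 * n2
  have k2 : X 1 * (X 0 * pderiv 0 q + X 1 * pderiv 1 q + X 2 * pderiv 2 q)
      = (X 0 ^ 2 + X 1 ^ 2 + X 2 ^ 2) * K2 := by
    rw [hK2]; linear_combination X 0 * n3 - X 2 * n1
  have kk : X 1 * K1 = X 0 * K2 :=
    mul_left_cancel₀ nak_p_ne_zero (by linear_combination (-(X 1 : MvPolynomial (Fin 3) ℝ)) * k1 + X 0 * k2)
  have dvd2 : (X 0 : MvPolynomial (Fin 3) ℝ) ∣ K1 :=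
    ((nak_primeX0.2.2 (X 1) K1 ⟨K2, kk⟩)).resolve_left nak_X0_not_dvd_X1
  obtain ⟨K', hK'⟩ := dvd2
  have hEqE : nakE q = (X 0 ^ 2 + X 1 ^ 2 + X 2 ^ 2) * K' := by
    unfold nakE
    exact mul_left_cancel₀ X0ne (by
      linear_combination k1 + (X 0 ^ 2 + X 1 ^ 2 + X 2 ^ 2) * hK')
  obtain ⟨g, hg⟩ := nakL1 q K' hEqE
  have hC2 : (C (2⁻¹:ℝ) : MvPolynomial (Fin 3) ℝ) * 2 = 1 := by
    rw [show ((2:MvPolynomial (Fin 3) ℝ)) = C (2:ℝ) from (map_ofNat C 2).symm, ← C_mul]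
    norm_num
  have hCa : (C (coeff 0 q / 2) : MvPolynomial (Fin 3) ℝ) * 2 = C (coeff 0 q) := by
    rw [show ((2:MvPolynomial (Fin 3) ℝ)) = C (2:ℝ) from (map_ofNat C 2).symm, ← C_mul]
    norm_num
  have hg0 := congrArg (fun t => pderiv (0 : Fin 3) t) hg
  have hg1 := congrArg (fun t => pderiv (1 : Fin 3) t) hg
  have hg2 := congrArg (fun t => pderiv (2 : Fin 3) t) hg
  simp only [map_add, pderiv_mul, pderiv_X_self, pderiv_pow, pderiv_C,
    pderiv_X_of_ne (show (0:Fin 3) ≠ 1 by decide), pderiv_X_of_ne (show (0:Fin 3) ≠ 2 by decide),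
    pderiv_X_of_ne (show (1:Fin 3) ≠ 0 by decide), pderiv_X_of_ne (show (1:Fin 3) ≠ 2 by decide),
    pderiv_X_of_ne (show (2:Fin 3) ≠ 0 by decide), pderiv_X_of_ne (show (2:Fin 3) ≠ 1 by decide),
    zero_mul, mul_zero, one_mul, mul_one, add_zero, zero_add] at hg0 hg1 hg2
  have key1 : X 1 * pderiv 0 g + pderiv 0 Ft2 = X 0 * pderiv 1 g + pderiv 1 Ft1 :=
    mul_left_cancel₀ nak_p_ne_zero (by linear_combination n3 - X 1 * hg0 + X 0 * hg1)
  have key2 : X 0 * pderiv 2 g + pderiv 2 Ft1 = X 2 * pderiv 0 g + pderiv 0 Ft3 :=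
    mul_left_cancel₀ nak_p_ne_zero (by linear_combination n2 - X 0 * hg2 + X 2 * hg0)
  have key3 : X 1 * pderiv 2 g + pderiv 2 Ft2 = X 2 * pderiv 1 g + pderiv 1 Ft3 :=
    mul_left_cancel₀ nak_p_ne_zero (by linear_combination -n1 + X 2 * hg1 - X 1 * hg2)
  refine ⟨coeff 0 q / 2, C (2⁻¹:ℝ) * (g * X 0 + Ft1), C (2⁻¹:ℝ) * (g * X 1 + Ft2),
    C (2⁻¹:ℝ) * (g * X 2 + Ft3), ?_, ?_, ?_, ?_, ?_, ?_⟩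
  · refine mul_left_cancel₀ nak_two_ne_zero ?_
    linear_combination cA + X 0 * hg - X 0 * hCa
      - (X 0 ^ 2 + X 1 ^ 2 + X 2 ^ 2) * (g * X 0 + Ft1) * hC2
  · refine mul_left_cancel₀ nak_two_ne_zero ?_
    linear_combination cB + X 1 * hg - X 1 * hCa
      - (X 0 ^ 2 + X 1 ^ 2 + X 2 ^ 2) * (g * X 1 + Ft2) * hC2
  · refine mul_left_cancel₀ nak_two_ne_zero ?_
    linear_combination cC + X 2 * hg - X 2 * hCa
      - (X 0 ^ 2 + X 1 ^ 2 + X 2 ^ 2) * (g * X 2 + Ft3) * hC2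
  · simp only [map_add, pderiv_mul, pderiv_X_self, pderiv_C,
      pderiv_X_of_ne (show (0:Fin 3) ≠ 1 by decide), pderiv_X_of_ne (show (1:Fin 3) ≠ 0 by decide),
      zero_mul, mul_zero, one_mul, mul_one, add_zero, zero_add]
    linear_combination (-(C (2⁻¹:ℝ) : MvPolynomial (Fin 3) ℝ)) * key1
  · simp only [map_add, pderiv_mul, pderiv_X_self, pderiv_C,
      pderiv_X_of_ne (show (0:Fin 3) ≠ 2 by decide), pderiv_X_of_ne (show (2:Fin 3) ≠ 0 by decide),
      zero_mul, mul_zero, one_mul, mul_one, add_zero, zero_add]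
    linear_combination (C (2⁻¹:ℝ) : MvPolynomial (Fin 3) ℝ) * key2
  · simp only [map_add, pderiv_mul, pderiv_X_self, pderiv_C,
      pderiv_X_of_ne (show (1:Fin 3) ≠ 2 by decide), pderiv_X_of_ne (show (2:Fin 3) ≠ 1 by decide),
      zero_mul, mul_zero, one_mul, mul_one, add_zero, zero_add]
    linear_combination (C (2⁻¹:ℝ) : MvPolynomial (Fin 3) ℝ) * key3
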